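/- The Verschiebung V : W_{r-1}(K) → W_r(K) maps fil_n W_{r-1}(K) into fil_n W_r(K), and there is an exact sequence 0 → fil_n W_{r-1}(K) → fil_n W_r(K) → fil_{⌊n/p^{r-1}⌋} W_1(K) → 0, where the second map is induced by V and the third by projecting onto the top coordinate. -/

import Mathlib

/-- The Brylinski filtration `fil_n W_r(K)` on Witt vectors of length `r` over a discrete
valuation field `K`: writing a Witt vector of length `r` as `(f_{r-1}, …, f_0)` (so that the
paper's coordinate `f_i` is the Witt coordinate `coeff (r-1-i)`), it consists of those vectors
with `p^i · v(f_i) ≥ -n` for all `0 ≤ i ≤ r-1`. -/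
def filWitt (p : ℕ) [Fact p.Prime] {K : Type*} [Field K]
    (v : AddValuation K (WithTop ℤ)) (r n : ℕ) : Set (TruncatedWittVector p r K) :=
  {x | ∀ i : Fin r, ((-(n : ℤ) : ℤ) : WithTop ℤ) ≤ (p ^ (r - 1 - (i : ℕ))) • v (x.coeff i)}

/-- The Verschiebung `V : W_r(K) → W_{r+1}(K)`, prepending a zero coordinate: in the paper's
notation it sends `(f_{r-1},…,f_0)` to `(0,f_{r-1},…,f_0)`; in Witt coordinates,
`(V x).coeff 0 = 0` and `(V x).coeff (j+1) = x.coeff j`. -/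
def verWitt (p : ℕ) [Fact p.Prime] {K : Type*} [Field K] {r : ℕ}
    (x : TruncatedWittVector p r K) : TruncatedWittVector p (r + 1) K :=
  TruncatedWittVector.mk p fun i =>
    if h : (i : ℕ) = 0 then 0 else x.coeff ⟨(i : ℕ) - 1, by have := i.isLt; omega⟩

private lemma nsmul_top_eq (k : ℕ) (h : 0 < k) : k • (⊤ : WithTop ℤ) = ⊤ := by
  induction k with
  | zero => omega
  | succ m ih =>
    rcases Nat.eq_zero_or_pos m with h0 | h0
    · subst h0; simp
    · rw [succ_nsmul, ih h0]; simp

private lemma le_nsmul_top (k : ℕ) (h : 0 < k) (m : ℤ) :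
    ((m : WithTop ℤ)) ≤ k • (⊤ : WithTop ℤ) := by
  rw [nsmul_top_eq k h]; exact le_top

/-- The Verschiebung `V : W_r(K) → W_{r+1}(K)` maps `fil_n W_r(K)` into `fil_n W_{r+1}(K)`,
and there is an exact sequence
`0 → fil_n W_r(K) → fil_n W_{r+1}(K) → fil_{⌊n/p^r⌋} W_1(K) → 0`,
where the second map is induced by `V` and the third by projecting onto the top coordinate
(the coordinate `f_r`, i.e. Witt coordinate `0`); here
`fil_m W_1(K) = {f ∈ K : v(f) ≥ -m}`. -/
theorem verWitt_filWitt_exact (p : ℕ) [Fact p.Prime] (K : Type*) [Field K] [CharP K p]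
    (v : AddValuation K (WithTop ℤ)) (hdisc : Function.Surjective v) (r n : ℕ) :
    (∀ x ∈ filWitt p v r n, verWitt p x ∈ filWitt p v (r + 1) n) ∧
    (∀ x y : TruncatedWittVector p r K, verWitt p x = verWitt p y → x = y) ∧
    (∀ y ∈ filWitt p v (r + 1) n,
      ((∃ x ∈ filWitt p v r n, verWitt p x = y) ↔ y.coeff 0 = 0)) ∧
    (∀ f : K, ((-(↑(n / p ^ r) : ℤ) : ℤ) : WithTop ℤ) ≤ v f →
      ∃ y ∈ filWitt p v (r + 1) n, y.coeff 0 = f) := by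
  have hp : 0 < p := (Fact.out : p.Prime).pos
  refine ⟨?_, ?_, ?_, ?_⟩
  · -- V preserves the filtration
    intro x hx i
    rw [verWitt, TruncatedWittVector.coeff_mk]
    rcases Nat.eq_zero_or_pos (i : ℕ) with h0 | h0
    · rw [dif_pos h0]
      simpa using le_nsmul_top _ (pow_pos hp _) (-(n : ℤ))
    · rw [dif_neg h0.ne']
      have := hx ⟨(i : ℕ) - 1, by have := i.isLt; omega⟩
      have hidx : r - 1 - ((i : ℕ) - 1) = r + 1 - 1 - (i : ℕ) := by omega
      simpa [hidx] using this
  · -- injectivity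
    intro x y hxy
    ext j
    have := congrArg (fun z => TruncatedWittVector.coeff
      ⟨(j : ℕ) + 1, by have := j.isLt; omega⟩ z) hxy
    simpa [verWitt, TruncatedWittVector.coeff_mk] using this
  · -- exactness in the middle
    intro y hy
    constructor
    · rintro ⟨x, -, rfl⟩
      simp [verWitt, TruncatedWittVector.coeff_mk]
    · intro h0
      refine ⟨TruncatedWittVector.mk p fun j =>
        y.coeff ⟨(j : ℕ) + 1, by have := j.isLt; omega⟩, ?_, ?_⟩
      · intro j
        have := hy ⟨(j : ℕ) + 1, by have := j.isLt; omega⟩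
        have hidx : r - ((j : ℕ) + 1) = r - 1 - (j : ℕ) := by omega
        simpa [TruncatedWittVector.coeff_mk, hidx] using this
      · ext i
        rw [verWitt, TruncatedWittVector.coeff_mk]
        rcases Nat.eq_zero_or_pos (i : ℕ) with hi | hi
        · rw [dif_pos hi]
          have : i = ⟨0, by omega⟩ := Fin.ext hi
          rw [this] at *
          exact h0.symm
        · rw [dif_neg hi.ne']
          rw [TruncatedWittVector.coeff_mk]
          congr 1
          apply Fin.ext
          simp
          omega
  · -- surjectivity onto fil_{⌊n/p^r⌋} W_1(K)
    intro f hf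
    refine ⟨TruncatedWittVector.mk p fun i => if (i : ℕ) = 0 then f else 0, ?_, ?_⟩
    · intro i
      rw [TruncatedWittVector.coeff_mk]
      rcases Nat.eq_zero_or_pos (i : ℕ) with h0 | h0
      · rw [if_pos h0, h0]
        simp only [Nat.sub_zero, Nat.add_sub_cancel]
        calc ((-(n : ℤ) : ℤ) : WithTop ℤ)
            ≤ ((p ^ r • (-(↑(n / p ^ r) : ℤ)) : ℤ) : WithTop ℤ) := by
              rw [WithTop.coe_le_coe]
              have h1 : n / p ^ r * p ^ r ≤ n := Nat.div_mul_le_self n (p ^ r)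
              have h2 : ((n / p ^ r : ℕ) : ℤ) * ((p ^ r : ℕ) : ℤ) ≤ (n : ℤ) := by
                exact_mod_cast h1
              rw [nsmul_eq_mul]
              push_cast at h2 ⊢
              linarith
          _ = (p ^ r) • ((-(↑(n / p ^ r) : ℤ) : ℤ) : WithTop ℤ) := by
              push_cast
              rfl
          _ ≤ (p ^ r) • v f := nsmul_le_nsmul_right hf _
      · rw [if_neg h0.ne']
        have : v (0 : K) = ⊤ := by simp
        rw [this]
        exact le_nsmul_top _ (pow_pos hp _) _
    · rw [TruncatedWittVector.coeff_mk]
      simp
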